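/- For every non-edge e of G, adding e to G creates an induced path on 6 vertices. -/

import Mathlib

open SimpleGraph

/-- The set of nonzero cubes in a field. -/
def cubes (F : Type) [Field F] : Set F := {s | ∃ x : F, x ≠ 0 ∧ x ^ 3 = s}

/-- The Cayley graph on `F` with connection set the nonzero cubes:
`x ~ y` iff `x - y` is a nonzero cube. -/
def cayley (F : Type) [Field F] : SimpleGraph F :=
  SimpleGraph.fromRel (fun x y => x - y ∈ cubes F)

/-- `v : Fin n → V` is an induced path on `n` vertices in `G`. -/
def IsInducedPath {V : Type} (G : SimpleGraph V) {n : ℕ} (v : Fin n → V) : Prop :=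
  Function.Injective v ∧
    ∀ i j : Fin n, G.Adj (v i) (v j) ↔ (i.val + 1 = j.val ∨ j.val + 1 = i.val)

/-! ### A concrete model of GF(16): `Fin 16` with polynomial arithmetic mod `x^4+x+1`. -/

def spread (n : ℕ) : ℕ := n % 2 + n / 2 % 2 * 16 + n / 4 % 2 * 256 + n / 8 % 2 * 4096

def kmulNat (a b : ℕ) : ℕ :=
  let p := spread a * spread b
  let c : ℕ → ℕ := fun k => p / 16 ^ k % 16 % 2
  (c 0 + c 4) % 2 + (c 1 + c 4 + c 5) % 2 * 2 + (c 2 + c 5 + c 6) % 2 * 4 +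
    (c 3 + c 6) % 2 * 8

def kaddNat (a b : ℕ) : ℕ :=
  (a % 2 + b % 2) % 2 + (a / 2 % 2 + b / 2 % 2) % 2 * 2 + (a / 4 % 2 + b / 4 % 2) % 2 * 4 +
    (a / 8 % 2 + b / 8 % 2) % 2 * 8

def K : Type := Fin 16

def mkK (n : ℕ) : K := (⟨n % 16, Nat.mod_lt _ (by norm_num)⟩ : Fin 16)

instance : DecidableEq K := instDecidableEqFin 16
instance : Fintype K := Fin.fintype 16

def kadd (a b : K) : K := mkK (kaddNat (Fin.val a) (Fin.val b))
def kmul (a b : K) : K := mkK (kmulNat (Fin.val a) (Fin.val b))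
def kinv (a : K) : K :=
  let a2 := kmul a a; let a4 := kmul a2 a2; kmul (kmul a4 a4) (kmul a4 a2)

instance : Zero K := ⟨mkK 0⟩
instance : One K := ⟨mkK 1⟩
instance : Add K := ⟨kadd⟩
instance : Mul K := ⟨kmul⟩
instance : Neg K := ⟨id⟩
instance : Inv K := ⟨kinv⟩

instance : Field K where
  add := kadd
  add_assoc := by decide +kernel
  zero := mkK 0
  zero_add := by decide +kernel
  add_zero := by decide +kernel
  add_comm := by decide +kernel
  nsmul := nsmulRec
  zsmul := zsmulRec
  mul := kmul
  mul_assoc := by decide +kernel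
  one := mkK 1
  one_mul := by decide +kernel
  mul_one := by decide +kernel
  left_distrib := by decide +kernel
  right_distrib := by decide +kernel
  zero_mul := by decide +kernel
  mul_zero := by decide +kernel
  mul_comm := by decide +kernel
  neg := id
  neg_add_cancel := by decide +kernel
  inv := kinv
  exists_pair_ne := ⟨mkK 0, mkK 1, by decide +kernel⟩
  mul_inv_cancel := by decide +kernel
  inv_zero := by decide +kernel
  nnqsmul := _
  qsmul := _

instance cubesDec (d : K) : Decidable (d ∈ cubes K) :=
  decidable_of_iff (∃ x : K, x ≠ 0 ∧ x ^ 3 = d) Iff.rfl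

instance cayleyDec : DecidableRel (cayley K).Adj := fun a b =>
  decidable_of_iff (a ≠ b ∧ ((a - b) ∈ cubes K ∨ (b - a) ∈ cubes K)) Iff.rfl

instance supDec (D : K) :
    DecidableRel (cayley K ⊔ SimpleGraph.fromEdgeSet {s((0 : K), D)}).Adj := fun a b =>
  decidable_of_iff ((cayley K).Adj a b ∨ (s(a, b) = s((0 : K), D) ∧ a ≠ b)) Iff.rfl

/-- Table of induced paths: for each noncube `D`, a 6-vertex induced path in `G + {0,D}`. -/
def tbl : ℕ → ℕ → ℕ
  | 2, i => [0, 2, 3, 9, 5, 4].getD i 0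
  | 3, i => [0, 3, 2, 13, 5, 4].getD i 0
  | 4, i => [0, 4, 5, 9, 3, 2].getD i 0
  | 5, i => [0, 5, 4, 11, 3, 2].getD i 0
  | 6, i => [0, 6, 7, 11, 3, 2].getD i 0
  | 7, i => [0, 7, 6, 9, 3, 2].getD i 0
  | 9, i => [0, 9, 3, 2, 13, 7].getD i 0
  | 11, i => [0, 11, 3, 2, 13, 5].getD i 0
  | 13, i => [0, 13, 2, 3, 9, 6].getD i 0
  | 14, i => [0, 14, 2, 3, 9, 5].getD i 0
  | _, _ => 0

def pth (D : K) (i : Fin 6) : K := mkK (tbl (Fin.val D) (Fin.val i))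

lemma key : ∀ D : K, D ≠ 0 → D ∉ cubes K →
    Function.Injective (pth D) ∧
      ∀ i j : Fin 6,
        (cayley K ⊔ SimpleGraph.fromEdgeSet {s((0 : K), D)}).Adj (pth D i) (pth D j) ↔
          (i.val + 1 = j.val ∨ j.val + 1 = i.val) := by decide +kernel

lemma cubes_map {F : Type} [Field F] (φ : K ≃+* F) (d : K) :
    φ d ∈ cubes F ↔ d ∈ cubes K := by
  constructor
  · rintro ⟨x, hx, h3⟩
    refine ⟨φ.symm x, by simp [hx], φ.injective ?_⟩
    rw [map_pow]; simp [h3]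
  · rintro ⟨x, hx, h3⟩
    exact ⟨φ x, by simp [hx], by rw [← map_pow, h3]⟩

lemma cayley_adj {F : Type} [Field F] (a b : F) :
    (cayley F).Adj a b ↔ a ≠ b ∧ ((a - b) ∈ cubes F ∨ (b - a) ∈ cubes F) := Iff.rfl

theorem stmt13 (F : Type) [Field F] [Fintype F] (hF : Fintype.card F = 16)
    (x y : F) (hxy : x ≠ y) (hne : ¬ (cayley F).Adj x y) :
    ∃ v : Fin 6 → F,
      IsInducedPath (cayley F ⊔ SimpleGraph.fromEdgeSet {s(x, y)}) v := by
  have hcard : Fintype.card K = Fintype.card F := by rw [hF]; rfl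
  let φ : K ≃+* F := FiniteField.ringEquivOfCardEq hcard
  set D : K := φ.symm (y - x) with hD
  have hφD : φ D = y - x := φ.apply_symm_apply _
  have hD0 : D ≠ 0 := by
    intro h
    apply hxy
    have h2 : y - x = 0 := by rw [← hφD, h, map_zero]
    linear_combination -h2
  have hsub : y - x ∉ cubes F := by
    intro h
    exact hne ((cayley_adj x y).mpr ⟨hxy, Or.inr h⟩)
  have hDnc : D ∉ cubes K := by
    intro h
    exact hsub (by rw [← hφD]; exact (cubes_map φ D).mpr h)
  obtain ⟨hinj, hadj⟩ := key D hD0 hDnc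
  have e0 : ∀ t : K, x + φ t = x ↔ t = 0 := by
    intro t
    constructor
    · intro h
      apply φ.injective
      rw [map_zero]; linear_combination h
    · intro h; simp [h]
  have eD : ∀ t : K, x + φ t = y ↔ t = D := by
    intro t
    constructor
    · intro h; apply φ.injective; rw [hφD]; linear_combination h
    · intro h; rw [h, hφD]; ring
  refine ⟨fun i => x + φ (pth D i), ?_, ?_⟩
  · intro i j h
    exact hinj (φ.injective (by linear_combination h))
  · intro i j
    rw [← hadj i j]
    set a := pth D i with ha
    set b := pth D j with hb
    simp only [SimpleGraph.sup_adj]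
    apply or_congr
    · rw [cayley_adj, cayley_adj]
      have d1 : x + φ a - (x + φ b) = φ (a - b) := by rw [map_sub]; ring
      have d2 : x + φ b - (x + φ a) = φ (b - a) := by rw [map_sub]; ring
      rw [d1, d2, cubes_map, cubes_map]
      have : x + φ a ≠ x + φ b ↔ a ≠ b := by
        constructor
        · intro h hab; exact h (by rw [hab])
        · intro h hab; exact h (φ.injective (by linear_combination hab))
      rw [this]
    · have hxφ : ∀ s t : K, x + φ s = x + φ t ↔ s = t := fun s t =>
        ⟨fun h => φ.injective (by linear_combination h), fun h => by rw [h]⟩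
      simp only [SimpleGraph.fromEdgeSet_adj, Set.mem_singleton_iff, Sym2.eq, Sym2.rel_iff',
        Prod.mk.injEq, Prod.swap_prod_mk, ne_eq, e0, eD, hxφ]
      exact Iff.rfl
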